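/- The distance of f: F_2^n → {0,1} from the class of odd-cycle-free functions is exactly (1/2)(ρ + min_α f̂(α)), where ρ = E_x[f(x)] and the minimum is over all α ∈ F_2^n. -/

import Mathlib

open Finset
open scoped Classical

abbrev V (n : ℕ) : Type := Fin n → ZMod 2

def dotp {n : ℕ} (α x : V n) : ZMod 2 := ∑ i, α i * x i

def IsBool {n : ℕ} (f : V n → ℝ) : Prop := ∀ x, f x = 0 ∨ f x = 1

/-- `f` is odd-cycle-free: no odd `k` and `x_1,…,x_k` in the support summing to `0`. -/
def OCF {n : ℕ} (f : V n → ℝ) : Prop :=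
  ∀ k : ℕ, Odd k → ¬ ∃ x : Fin k → V n, (∀ i, f (x i) = 1) ∧ (∑ i, x i) = 0

noncomputable def fhat {n : ℕ} (f : V n → ℝ) (α : V n) : ℝ :=
  (∑ x : V n, f x * (-1 : ℝ) ^ (dotp α x).val) / 2 ^ n

/-- `f` is `ε`-far from odd-cycle-free: every Boolean OCF function differs from `f`
on at least `ε·2^n` points. -/
def FarFromOCF {n : ℕ} (ε : ℝ) (f : V n → ℝ) : Prop :=
  ∀ g : V n → ℝ, IsBool g → OCF g →
    ε * 2 ^ n ≤ ((Finset.univ.filter fun x => f x ≠ g x).card : ℝ)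


lemma zmod2_cases (a : ZMod 2) : a = 0 ∨ a = 1 := by fin_cases a; exacts [Or.inl rfl, Or.inr rfl]

lemma dotp_sum {n : ℕ} (α : V n) {k : ℕ} (x : Fin k → V n) :
    dotp α (∑ i, x i) = ∑ i, dotp α (x i) := by
  unfold dotp
  rw [Finset.sum_comm]
  congr 1; ext j
  simp [Finset.sum_apply, Finset.mul_sum]

lemma dotp_zero {n : ℕ} (α : V n) : dotp α 0 = 0 := by
  simp [dotp]

lemma dotp_eq_phi {n : ℕ} (φ : V n →ₗ[ZMod 2] ZMod 2) (x : V n) :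
    dotp (fun i => φ (Pi.single i (1 : ZMod 2) : V n)) x = φ x := by
  conv_rhs => rw [show x = ∑ i, Pi.single i (x i) from (Finset.univ_sum_single x).symm]
  rw [map_sum]
  unfold dotp
  congr 1; ext i
  have : Pi.single i (x i) = x i • (Pi.single i (1 : ZMod 2) : V n) := by
    rw [← Pi.single_smul]; simp
  rw [this, map_smul, smul_eq_mul, mul_comm]

lemma Vn_add_self {n : ℕ} (x : V n) : x + x = 0 := by
  funext j
  have : ∀ a : ZMod 2, a + a = 0 := by decide
  simpa using this (x j)

lemma ocf_structure {n : ℕ} {g : V n → ℝ} (hb : IsBool g) (ho : OCF g) :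
    ∃ α : V n, ∀ x, g x = 1 → dotp α x = 1 := by
  by_cases hex : ∃ s0, g s0 = 1
  · obtain ⟨s0, hs0⟩ := hex
    set W : Submodule (ZMod 2) (V n) :=
      Submodule.span (ZMod 2) {v | ∃ s, g s = 1 ∧ v = s + s0} with hW
    -- every element of W is an even sum of support elements
    have key : ∀ v ∈ W, ∃ k : ℕ, Even k ∧ ∃ x : Fin k → V n,
        (∀ i, g (x i) = 1) ∧ (∑ i, x i) = v := by
      intro v hv
      refine Submodule.span_induction ?_ ?_ ?_ ?_ hv
      · rintro v ⟨s, hs, rfl⟩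
        exact ⟨2, even_two, ![s, s0], by
          intro i; fin_cases i <;> simpa [hs, hs0], by simp [Fin.sum_univ_two]⟩
      · exact ⟨0, Even.zero, ![], by intro i; exact absurd i.2 (by omega), by simp⟩
      · rintro a b - - ⟨k1, he1, x1, hx1, hsum1⟩ ⟨k2, he2, x2, hx2, hsum2⟩
        refine ⟨k1 + k2, he1.add he2, Fin.append x1 x2, ?_, ?_⟩
        · intro i
          refine Fin.addCases (fun j => ?_) (fun j => ?_) i
          · rw [Fin.append_left]; exact hx1 j
          · rw [Fin.append_right]; exact hx2 j
        · rw [Fin.sum_univ_add]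
          simp only [Fin.append_left, Fin.append_right, hsum1, hsum2]
      · rintro c v - ⟨k, he, x, hx, hsum⟩
        rcases zmod2_cases c with rfl | rfl
        · exact ⟨0, Even.zero, ![], by intro i; exact absurd i.2 (by omega), by simp⟩
        · exact ⟨k, he, x, hx, by simpa using hsum⟩
    have hs0W : s0 ∉ W := by
      intro hmem
      obtain ⟨k, hk, x, hx, hsum⟩ := key s0 hmem
      refine ho (k + 1) (Even.add_one hk) ⟨Fin.snoc x s0, ?_, ?_⟩
      · intro i
        refine Fin.lastCases ?_ ?_ i
        · simpa using hs0
        · intro j; simpa using hx j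
      · rw [Fin.sum_univ_castSucc]
        simp [Fin.snoc_castSucc, Fin.snoc_last, hsum, Vn_add_self]
    -- build a linear functional vanishing on W with φ s0 = 1
    have hmkne : (Submodule.Quotient.mk s0 : V n ⧸ W) ≠ 0 := by
      simpa [Submodule.Quotient.mk_eq_zero] using hs0W
    set ι : ZMod 2 →ₗ[ZMod 2] V n ⧸ W :=
      LinearMap.toSpanSingleton (ZMod 2) _ (Submodule.Quotient.mk s0) with hι
    have hinj : Function.Injective ι := by
      intro a b hab
      have hι1 : ι 1 = Submodule.Quotient.mk s0 := by
        simp [hι, LinearMap.toSpanSingleton_apply]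
      rcases zmod2_cases a with rfl | rfl <;> rcases zmod2_cases b with rfl | rfl
      · rfl
      · exact absurd (by rw [← hι1, ← hab, map_zero]) hmkne
      · exact absurd (by rw [← hι1, hab, map_zero]) hmkne
      · rfl
    obtain ⟨ψ, hψ⟩ := ι.exists_leftInverse_of_injective (by
      rwa [LinearMap.ker_eq_bot])
    set φ : V n →ₗ[ZMod 2] ZMod 2 := ψ.comp W.mkQ with hφ
    have hφs0 : φ s0 = 1 := by
      have : ψ (ι 1) = 1 := by rw [← LinearMap.comp_apply, hψ]; simp
      simpa [hφ, hι, LinearMap.toSpanSingleton_apply] using this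
    have hφS : ∀ s, g s = 1 → φ s = 1 := by
      intro s hs
      have hmem : s + s0 ∈ W := Submodule.subset_span ⟨s, hs, rfl⟩
      have : φ (s + s0) = 0 := by
        have hz : W.mkQ (s + s0) = 0 := (Submodule.Quotient.mk_eq_zero W).mpr hmem
        simp [hφ, LinearMap.comp_apply, hz]
      have h2 : φ s + φ s0 = 0 := by rw [← map_add]; exact this
      rw [hφs0] at h2
      rcases zmod2_cases (φ s) with h | h
      · rw [h] at h2; simp at h2
      · exact h
    exact ⟨fun i => φ (Pi.single i (1 : ZMod 2) : V n), fun x hx => by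
      rw [dotp_eq_phi]; exact hφS x hx⟩
  · exact ⟨0, fun x hx => absurd ⟨x, hx⟩ hex⟩

noncomputable def cS {n : ℕ} (f : V n → ℝ) : ℕ :=
  (univ.filter (fun x => f x = 1)).card

noncomputable def cA {n : ℕ} (f : V n → ℝ) (α : V n) : ℕ :=
  (univ.filter (fun x => f x = 1 ∧ dotp α x = 0)).card

lemma sum_ite_card {n : ℕ} (p : V n → Prop) [DecidablePred p] (c : ℝ) :
    ∑ x : V n, (if p x then c else 0) = ((univ.filter p).card : ℝ) * c := by
  rw [← Finset.sum_filter, Finset.sum_const, nsmul_eq_mul]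

lemma fhat_zero {n : ℕ} (f : V n → ℝ) (hf : IsBool f) :
    fhat f 0 = (cS f : ℝ) / 2 ^ n := by
  unfold fhat cS
  congr 1
  have h1 := sum_ite_card (fun x => f x = 1) (1:ℝ)
  rw [mul_one] at h1
  rw [← h1]
  refine Finset.sum_congr rfl fun x _ => ?_
  rcases hf x with h | h <;> simp [h, dotp]

lemma fhat_eq {n : ℕ} (f : V n → ℝ) (hf : IsBool f) (α : V n) :
    fhat f α = (2 * (cA f α : ℝ) - (cS f : ℝ)) / 2 ^ n := by
  unfold fhat cA cS
  congr 1
  have : ∀ x : V n, f x * (-1 : ℝ) ^ (dotp α x).val =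
      (if f x = 1 ∧ dotp α x = 0 then (2 : ℝ) else 0) - (if f x = 1 then (1:ℝ) else 0) := by
    intro x
    rcases hf x with h | h <;> rcases zmod2_cases (dotp α x) with h2 | h2 <;>
      norm_num [h, h2, show ((1 : ZMod 2)).val = 1 from rfl]
  rw [Finset.sum_congr rfl fun x _ => this x, Finset.sum_sub_distrib,
    sum_ite_card (fun x => f x = 1 ∧ dotp α x = 0) 2,
    sum_ite_card (fun x => f x = 1) 1]
  ring

lemma half_sum_eq {n : ℕ} (f : V n → ℝ) (hf : IsBool f) (α : V n) :
    (1 / 2) * (fhat f 0 + fhat f α) = (cA f α : ℝ) / 2 ^ n := by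
  rw [fhat_zero f hf, fhat_eq f hf α]
  have h2 : (2 : ℝ) ^ n ≠ 0 := by positivity
  field_simp
  ring

theorem stmt5 {n : ℕ} (f : V n → ℝ) (hf : IsBool f) :
    sInf {d : ℝ | ∃ g : V n → ℝ, IsBool g ∧ OCF g ∧
        d = ((Finset.univ.filter fun x => f x ≠ g x).card : ℝ) / 2 ^ n} =
      (1 / 2) * (fhat f 0 + ⨅ α : V n, fhat f α) := by
  obtain ⟨α₀, -, hα₀⟩ := Finset.exists_min_image (univ : Finset (V n))
    (fun α => cA f α) ⟨Classical.arbitrary _, mem_univ _⟩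
  have hα₀' : ∀ α, cA f α₀ ≤ cA f α := fun α => hα₀ α (mem_univ _)
  have h2 : (0:ℝ) < 2 ^ n := by positivity
  -- the minimizing fhat
  have hmono : ∀ α, fhat f α₀ ≤ fhat f α := by
    intro α
    rw [fhat_eq f hf, fhat_eq f hf]
    have hc : (cA f α₀ : ℝ) ≤ (cA f α : ℝ) := Nat.cast_le.mpr (hα₀' α)
    gcongr
  have hiInf : (⨅ α : V n, fhat f α) = fhat f α₀ :=
    le_antisymm (ciInf_le (Finite.bddBelow_range _) α₀) (le_ciInf hmono)
  rw [hiInf, half_sum_eq f hf α₀]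
  -- the candidate nearest OCF function
  set gm : V n → ℝ := fun x => if f x = 1 ∧ dotp α₀ x = 1 then 1 else 0 with hgm
  have hgmb : IsBool gm := by
    intro x
    by_cases h : f x = 1 ∧ dotp α₀ x = 1 <;> simp [hgm, h]
  have hgmo : OCF gm := by
    rintro k hk ⟨x, hx, hsum⟩
    have hd1 : ∀ i, dotp α₀ (x i) = 1 := by
      intro i
      by_cases hc : f (x i) = 1 ∧ dotp α₀ (x i) = 1
      · exact hc.2
      · have := hx i
        rw [hgm] at this
        simp only [if_neg hc] at this
        norm_num at this
    have hks : dotp α₀ (∑ i, x i) = (k : ZMod 2) := by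
      rw [dotp_sum]; simp [hd1]
    rw [hsum, dotp_zero] at hks
    obtain ⟨m, rfl⟩ := hk
    have h2 : ((2 * m + 1 : ℕ) : ZMod 2) = 0 := hks.symm
    push_cast at h2
    rw [show (2 : ZMod 2) = 0 by decide] at h2
    simp at h2
  have hcard : ((univ.filter fun x => f x ≠ gm x).card) = cA f α₀ := by
    unfold cA
    congr 1
    ext x
    simp only [mem_filter, mem_univ, true_and]
    constructor
    · intro hne
      rcases hf x with h | h
      · exfalso
        apply hne
        simp [hgm, h]
      · refine ⟨h, ?_⟩
        rcases zmod2_cases (dotp α₀ x) with h2 | h2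
        · exact h2
        · exfalso; apply hne; simp [hgm, h, h2]
    · rintro ⟨h1, h2⟩
      simp only [hgm, h1, h2]
      norm_num
  have memD : (cA f α₀ : ℝ) / 2 ^ n ∈ {d : ℝ | ∃ g : V n → ℝ, IsBool g ∧ OCF g ∧
      d = ((Finset.univ.filter fun x => f x ≠ g x).card : ℝ) / 2 ^ n} :=
    ⟨gm, hgmb, hgmo, by rw [hcard]⟩
  refine le_antisymm (csInf_le ⟨0, ?_⟩ memD) (le_csInf ⟨_, memD⟩ ?_)
  · rintro d ⟨g, -, -, rfl⟩
    positivity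
  · rintro d ⟨g, hgb, hgo, rfl⟩
    obtain ⟨α, hα⟩ := ocf_structure hgb hgo
    have hsub : (univ.filter fun x => f x = 1 ∧ dotp α x = 0) ⊆
        univ.filter (fun x => f x ≠ g x) := by
      intro x hx
      simp only [mem_filter, mem_univ, true_and] at hx ⊢
      rcases hgb x with h | h
      · rw [hx.1, h]; norm_num
      · exfalso
        have := hα x h
        rw [hx.2] at this
        exact absurd this (by decide)
    have h1 : cA f α₀ ≤ (univ.filter (fun x => f x ≠ g x)).card :=
      le_trans (hα₀' α) (Finset.card_le_card hsub)
    have h1' : (cA f α₀ : ℝ) ≤ ((univ.filter (fun x => f x ≠ g x)).card : ℝ) :=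
      Nat.cast_le.mpr h1
    gcongr
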